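/- arXiv:math/0508503 — 6 statements merged into one kernel-verified Lean document; each statement's English description precedes it below -/
import Mathlib

section
/- The function d((x_1,...,x_n),(y_1,...,y_n)) = min over permutations π of max_i |x_i - y_{π(i)}| equals max_i |x_{(i)} - y_{(i)}|, where x_{(i)} and y_{(i)} denote the i-th order statistics of the two samples. -/
open Finset

-- key lemma: for sorted x y, any permutation's max matching dominates identity matching
lemma sorted_key {n : ℕ} (x y : Fin n → ℝ) (hx : Monotone x) (hy : Monotone y)
    (π : Equiv.Perm (Fin n)) (i : Fin n) :
    ∃ j : Fin n, |x i - y i| ≤ |x j - y (π j)| := by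
  rcases le_total (x i) (y i) with h | h
  · -- find j ≤ i with i ≤ π j
    have hex : ∃ j : Fin n, j ≤ i ∧ i ≤ π j := by
      by_contra hc
      push_neg at hc
      have hcard : (Iic i).card ≤ (Iio i).card := by
        apply Finset.card_le_card_of_injOn π
        · intro j hj
          simp only [Finset.mem_coe, mem_Iic] at hj
          simpa [mem_Iio] using hc j hj
        · exact π.injective.injOn
      rw [Fin.card_Iic, Fin.card_Iio] at hcard
      omega
    obtain ⟨j, hj1, hj2⟩ := hex
    refine ⟨j, ?_⟩
    have h1 : x j ≤ x i := hx hj1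
    have h2 : y i ≤ y (π j) := hy hj2
    rw [abs_sub_comm (x i), abs_of_nonneg (by linarith), abs_sub_comm (x j),
      abs_of_nonneg (by linarith)]
    linarith
  · -- find j ≥ i with π j ≤ i
    have hex : ∃ j : Fin n, i ≤ j ∧ π j ≤ i := by
      by_contra hc
      push_neg at hc
      have hcard : (Ici i).card ≤ (Ioi i).card := by
        apply Finset.card_le_card_of_injOn π
        · intro j hj
          simp only [Finset.mem_coe, mem_Ici] at hj
          simpa [mem_Ioi] using hc j hj
        · exact π.injective.injOn
      rw [Fin.card_Ici, Fin.card_Ioi] at hcard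
      have := i.isLt
      omega
    obtain ⟨j, hj1, hj2⟩ := hex
    refine ⟨j, ?_⟩
    have h1 : x i ≤ x j := hx hj1
    have h2 : y (π j) ≤ y i := hy hj2
    rw [abs_of_nonneg (by linarith), abs_of_nonneg (by linarith)]
    linarith

theorem min_perm_matching_eq_order_statistics {n : ℕ} (hn : 0 < n) (x y : Fin n → ℝ) :
    (univ.inf' (univ_nonempty_iff.mpr ⟨1⟩) fun π : Equiv.Perm (Fin n) =>
      univ.sup' (univ_nonempty_iff.mpr ⟨⟨0, hn⟩⟩) fun i => |x i - y (π i)|) =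
    univ.sup' (univ_nonempty_iff.mpr ⟨⟨0, hn⟩⟩)
      fun i => |x (Tuple.sort x i) - y (Tuple.sort y i)| := by
  set σ := Tuple.sort x with hσ
  set τ := Tuple.sort y with hτ
  have hx : Monotone (x ∘ σ) := Tuple.monotone_sort x
  have hy : Monotone (y ∘ τ) := Tuple.monotone_sort y
  apply le_antisymm
  · apply Finset.inf'_le_of_le _ (Finset.mem_univ (σ.symm.trans τ))
    apply Finset.sup'_le
    intro i _
    have : |x i - y ((σ.symm.trans τ) i)| = |x (σ (σ.symm i)) - y (τ (σ.symm i))| := by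
      simp
    rw [this]
    exact Finset.le_sup' (fun j => |x (σ j) - y (τ j)|) (Finset.mem_univ (σ.symm i))
  · apply Finset.le_inf'
    intro π _
    apply Finset.sup'_le
    intro i _
    obtain ⟨j, hj⟩ := sorted_key (x ∘ σ) (y ∘ τ) hx hy (σ.trans (π.trans τ.symm)) i
    simp only [Function.comp, Equiv.trans_apply, Equiv.apply_symm_apply] at hj
    exact hj.trans (Finset.le_sup' (fun i => |x i - y (π i)|) (Finset.mem_univ (σ j)))
end

section
/- If a finite set X of n > k points in ℝ^k is in general position (no affine hyperplane contains more than k of the points), then for any point θ ∈ ℝ^k not in X, there exists an affine hyperplane L containing exactly k points of X such that θ and all remaining points of X lie strictly on the same open side of L. -/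
attribute [local instance] Classical.propDecidable

/-- A finite set in ℝ^k is in general position if no affine hyperplane
contains more than k of its points. -/
def InGeneralPosition {k : ℕ} (X : Finset (EuclideanSpace ℝ (Fin k))) : Prop :=
  ∀ (u : EuclideanSpace ℝ (Fin k)) (c : ℝ), u ≠ 0 →
    (X.filter fun x => (inner ℝ u x : ℝ) = c).card ≤ k

/-- There is a nonzero affine functional vanishing on any set of at most `k` points. -/
lemma exists_affine_vanishing {k : ℕ} (A : Finset (EuclideanSpace ℝ (Fin k)))
    (hA : A.card ≤ k) :
    ∃ (v : EuclideanSpace ℝ (Fin k)) (d : ℝ), (v, d) ≠ 0 ∧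
      ∀ a ∈ A, (inner ℝ v a : ℝ) = d := by
  classical
  set L : (EuclideanSpace ℝ (Fin k) × ℝ) →ₗ[ℝ] (A → ℝ) :=
    { toFun := fun p a => (inner ℝ p.1 (a : EuclideanSpace ℝ (Fin k)) : ℝ) - p.2
      map_add' := by
        intro p q; funext a
        show (inner ℝ (p.1 + q.1) (a : EuclideanSpace ℝ (Fin k)) : ℝ) - (p.2 + q.2) = _
        rw [inner_add_left]
        show _ = ((inner ℝ p.1 (a : EuclideanSpace ℝ (Fin k)) : ℝ) - p.2) +
          ((inner ℝ q.1 (a : EuclideanSpace ℝ (Fin k)) : ℝ) - q.2)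
        ring
      map_smul' := by
        intro r p; funext a
        show (inner ℝ (r • p.1) (a : EuclideanSpace ℝ (Fin k)) : ℝ) - r * p.2 = _
        rw [real_inner_smul_left]
        show _ = r * ((inner ℝ p.1 (a : EuclideanSpace ℝ (Fin k)) : ℝ) - p.2)
        ring } with hL
  have hni : ¬ Function.Injective L := by
    intro h
    have h2 := LinearMap.finrank_le_finrank_of_injective h
    have e1 : Module.finrank ℝ (EuclideanSpace ℝ (Fin k) × ℝ) = k + 1 := by
      simp [Module.finrank_prod, finrank_euclideanSpace_fin]
    have e2 : Module.finrank ℝ ({ x // x ∈ A } → ℝ) = A.card := by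
      simp [Module.finrank_pi, Fintype.card_coe]
    omega
  rw [← LinearMap.ker_eq_bot] at hni
  obtain ⟨p, hp, hp0⟩ := Submodule.exists_mem_ne_zero_of_ne_bot hni
  refine ⟨p.1, p.2, hp0, fun a ha => ?_⟩
  have := congrFun (LinearMap.mem_ker.mp hp) ⟨a, ha⟩
  simpa [hL, sub_eq_zero] using this

/-- Pivot step: rotate the supporting hyperplane about its touching set to pick up
at least one more point of `X`, keeping `θ` strictly above. -/
lemma pivot_step {k : ℕ} (X : Finset (EuclideanSpace ℝ (Fin k)))
    (θ u v : EuclideanSpace ℝ (Fin k)) (c d : ℝ)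
    (hle : ∀ x ∈ X, c ≤ (inner ℝ u x : ℝ)) (hθc : c < (inner ℝ u θ : ℝ))
    (hθvd : (inner ℝ v θ : ℝ) = d)
    (hSvd : ∀ x ∈ X, (inner ℝ u x : ℝ) = c → (inner ℝ v x : ℝ) = d)
    (hex : ∃ x ∈ X, (inner ℝ v x : ℝ) < d) :
    ∃ (u' : EuclideanSpace ℝ (Fin k)) (c' : ℝ),
      (∀ x ∈ X, c' ≤ (inner ℝ u' x : ℝ)) ∧ c' < (inner ℝ u' θ : ℝ) ∧
      (X.filter fun x => (inner ℝ u x : ℝ) = c) ⊂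
        (X.filter fun x => (inner ℝ u' x : ℝ) = c') := by
  classical
  set N := X.filter fun x => (inner ℝ v x : ℝ) < d with hN
  have hNne : N.Nonempty := by
    obtain ⟨x, hx, h⟩ := hex
    exact ⟨x, Finset.mem_filter.mpr ⟨hx, h⟩⟩
  have hNpos : ∀ x ∈ N, 0 < (inner ℝ u x : ℝ) - c ∧ 0 < d - (inner ℝ v x : ℝ) := by
    intro x hx
    obtain ⟨hxX, hxv⟩ := Finset.mem_filter.mp hx
    constructor
    · have hne : (inner ℝ u x : ℝ) ≠ c := fun h => absurd (hSvd x hxX h) (ne_of_lt hxv)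
      have := hle x hxX
      cases lt_or_eq_of_le this with
      | inl h => linarith
      | inr h => exact absurd h.symm hne
    · linarith
  obtain ⟨x₁, hx₁N, hmin⟩ := N.exists_min_image
    (fun x => ((inner ℝ u x : ℝ) - c) / (d - (inner ℝ v x : ℝ))) hNne
  obtain ⟨hnum, hden⟩ := hNpos x₁ hx₁N
  set t := ((inner ℝ u x₁ : ℝ) - c) / (d - (inner ℝ v x₁ : ℝ)) with ht
  have htpos : 0 < t := div_pos hnum hden
  refine ⟨u + t • v, c + t * d, ?_, ?_, ?_⟩
  · intro x hx
    have hid : (inner ℝ (u + t • v) x : ℝ) = (inner ℝ u x : ℝ) + t * (inner ℝ v x : ℝ) := by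
      rw [inner_add_left, real_inner_smul_left]
    rw [hid]
    by_cases hvx : d ≤ (inner ℝ v x : ℝ)
    · have h1 := hle x hx
      nlinarith
    · push_neg at hvx
      have hxN : x ∈ N := Finset.mem_filter.mpr ⟨hx, hvx⟩
      have hm := hmin x hxN
      have hdenx : 0 < d - (inner ℝ v x : ℝ) := (hNpos x hxN).2
      rw [le_div_iff₀ hdenx] at hm
      linarith
  · have hid : (inner ℝ (u + t • v) θ : ℝ) = (inner ℝ u θ : ℝ) + t * (inner ℝ v θ : ℝ) := by
      rw [inner_add_left, real_inner_smul_left]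
    rw [hid, hθvd]
    linarith
  · rw [Finset.ssubset_iff_of_subset]
    · refine ⟨x₁, ?_, ?_⟩
      · refine Finset.mem_filter.mpr ⟨(Finset.mem_filter.mp hx₁N).1, ?_⟩
        have hid : (inner ℝ (u + t • v) x₁ : ℝ) =
            (inner ℝ u x₁ : ℝ) + t * (inner ℝ v x₁ : ℝ) := by
          rw [inner_add_left, real_inner_smul_left]
        rw [hid]
        have : t * (d - (inner ℝ v x₁ : ℝ)) = (inner ℝ u x₁ : ℝ) - c := by
          rw [ht, div_mul_cancel₀ _ (ne_of_gt hden)]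
        linarith
      · intro hmem
        have := (Finset.mem_filter.mp hmem).2
        linarith
    · intro x hx
      obtain ⟨hxX, hxc⟩ := Finset.mem_filter.mp hx
      refine Finset.mem_filter.mpr ⟨hxX, ?_⟩
      have hid : (inner ℝ (u + t • v) x : ℝ) = (inner ℝ u x : ℝ) + t * (inner ℝ v x : ℝ) := by
        rw [inner_add_left, real_inner_smul_left]
      rw [hid, hxc, hSvd x hxX hxc]
  
/-- Key pivoting lemma: a weakly supporting hyperplane with `θ` strictly above can be
rotated until it touches exactly `k` points of `X`. -/
lemma pivot_key {k n : ℕ} (hk : 2 ≤ k) (hkn : k < n)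
    (X : Finset (EuclideanSpace ℝ (Fin k))) (hX : X.card = n)
    (hGP : InGeneralPosition X) (θ : EuclideanSpace ℝ (Fin k)) (hθ : θ ∉ X) :
    ∀ (j : ℕ) (u : EuclideanSpace ℝ (Fin k)) (c : ℝ),
      (∀ x ∈ X, c ≤ (inner ℝ u x : ℝ)) → c < (inner ℝ u θ : ℝ) →
      k ≤ (X.filter fun x => (inner ℝ u x : ℝ) = c).card + j →
      ∃ (u' : EuclideanSpace ℝ (Fin k)) (c' : ℝ),
        (∀ x ∈ X, c' ≤ (inner ℝ u' x : ℝ)) ∧ c' < (inner ℝ u' θ : ℝ) ∧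
        (X.filter fun x => (inner ℝ u' x : ℝ) = c').card = k := by
  classical
  have done_case : ∀ (u : EuclideanSpace ℝ (Fin k)) (c : ℝ),
      c < (inner ℝ u θ : ℝ) →
      k ≤ (X.filter fun x => (inner ℝ u x : ℝ) = c).card →
      (X.filter fun x => (inner ℝ u x : ℝ) = c).card = k := by
    intro u c hθc hbig
    have hu : u ≠ 0 := by
      rintro rfl
      obtain ⟨x, hx⟩ := Finset.card_pos.mp (lt_of_lt_of_le (by omega) hbig)
      have hxc := (Finset.mem_filter.mp hx).2
      rw [inner_zero_left] at hxc
      rw [inner_zero_left] at hθc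
      linarith [hxc ▸ hθc]
    exact le_antisymm (hGP u c hu) hbig
  intro j
  induction j with
  | zero =>
    intro u c hle hθc hcard
    exact ⟨u, c, hle, hθc, done_case u c hθc (by omega)⟩
  | succ j ih =>
    intro u c hle hθc hcard
    by_cases hbig : k ≤ (X.filter fun x => (inner ℝ u x : ℝ) = c).card
    · exact ⟨u, c, hle, hθc, done_case u c hθc hbig⟩
    · push_neg at hbig
      set S := X.filter fun x => (inner ℝ u x : ℝ) = c with hS
      have hθS : θ ∉ S := fun h => hθ (Finset.mem_filter.mp h).1
      have hcardA : (insert θ S).card ≤ k := by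
        rw [Finset.card_insert_of_notMem hθS]; omega
      obtain ⟨v, d, hvd0, hvd⟩ := exists_affine_vanishing (insert θ S) hcardA
      have hθvd : (inner ℝ v θ : ℝ) = d := hvd θ (Finset.mem_insert_self _ _)
      have hSvd : ∀ x ∈ X, (inner ℝ u x : ℝ) = c → (inner ℝ v x : ℝ) = d := by
        intro x hx hxc
        exact hvd x (Finset.mem_insert_of_mem (Finset.mem_filter.mpr ⟨hx, hxc⟩))
      have hv : v ≠ 0 := by
        rintro rfl
        have hd : d = 0 := by rw [← hθvd, inner_zero_left]
        subst hd
        exact hvd0 rfl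
      have hexoff : ∃ x ∈ X, (inner ℝ v x : ℝ) ≠ d := by
        by_contra h
        push_neg at h
        have heq : X.filter (fun x => (inner ℝ v x : ℝ) = d) = X :=
          Finset.filter_true_of_mem h
        have hle' := hGP v d hv
        rw [heq, hX] at hle'
        omega
      obtain ⟨x₀, hx₀X, hx₀⟩ := hexoff
      have step : ∃ (u' : EuclideanSpace ℝ (Fin k)) (c' : ℝ),
          (∀ x ∈ X, c' ≤ (inner ℝ u' x : ℝ)) ∧ c' < (inner ℝ u' θ : ℝ) ∧
          (X.filter fun x => (inner ℝ u x : ℝ) = c) ⊂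
            (X.filter fun x => (inner ℝ u' x : ℝ) = c') := by
        rcases lt_or_gt_of_ne hx₀ with hlt | hgt
        · exact pivot_step X θ u v c d hle hθc hθvd hSvd ⟨x₀, hx₀X, hlt⟩
        · refine pivot_step X θ u (-v) c (-d) hle hθc ?_ ?_ ⟨x₀, hx₀X, ?_⟩
          · rw [inner_neg_left, hθvd]
          · intro x hx hxc
            rw [inner_neg_left, hSvd x hx hxc]
          · rw [inner_neg_left]
            linarith
      obtain ⟨u', c', hle', hθc', hss⟩ := step
      refine ih u' c' hle' hθc' ?_
      have hlt := Finset.card_lt_card hss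
      rw [← hS] at hlt
      omega

theorem exists_supporting_hyperplane {k n : ℕ} (hk : 2 ≤ k) (hkn : k < n)
    (X : Finset (EuclideanSpace ℝ (Fin k))) (hX : X.card = n)
    (hGP : InGeneralPosition X) (θ : EuclideanSpace ℝ (Fin k)) (hθ : θ ∉ X) :
    ∃ (u : EuclideanSpace ℝ (Fin k)) (c : ℝ), ‖u‖ = 1 ∧
      (X.filter fun x => (inner ℝ u x : ℝ) = c).card = k ∧
      c < (inner ℝ u θ : ℝ) ∧
      ∀ x ∈ X, (inner ℝ u x : ℝ) ≠ c → c < (inner ℝ u x : ℝ) := by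
  classical
  obtain ⟨u, c, hle, hθc, hcard⟩ := pivot_key hk hkn X hX hGP θ hθ k 0 (-1)
    (by intro x hx; rw [inner_zero_left]; linarith)
    (by rw [inner_zero_left]; linarith)
    (by omega)
  have hu : u ≠ 0 := by
    rintro rfl
    obtain ⟨x, hx⟩ := Finset.card_pos.mp (by rw [hcard]; omega)
    have hxc := (Finset.mem_filter.mp hx).2
    rw [inner_zero_left] at hxc
    rw [inner_zero_left] at hθc
    linarith [hxc ▸ hθc]
  have hnorm : (0 : ℝ) < ‖u‖ := norm_pos_iff.mpr hu
  have hinv : (0 : ℝ) < ‖u‖⁻¹ := inv_pos.mpr hnorm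
  refine ⟨‖u‖⁻¹ • u, ‖u‖⁻¹ * c, ?_, ?_, ?_, ?_⟩
  · rw [norm_smul, norm_inv, norm_norm, inv_mul_cancel₀ (ne_of_gt hnorm)]
  · have hfe : (X.filter fun x => (inner ℝ (‖u‖⁻¹ • u) x : ℝ) = ‖u‖⁻¹ * c) =
        (X.filter fun x => (inner ℝ u x : ℝ) = c) := by
      apply Finset.filter_congr
      intro x _
      rw [real_inner_smul_left]
      constructor
      · intro h
        exact mul_left_cancel₀ (ne_of_gt hinv) h
      · intro h
        rw [h]
    rw [hfe, hcard]
  · rw [real_inner_smul_left]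
    exact mul_lt_mul_of_pos_left hθc hinv
  · intro x hx hne
    rw [real_inner_smul_left] at hne ⊢
    have := hle x hx
    have h1 : ‖u‖⁻¹ * c ≤ ‖u‖⁻¹ * (inner ℝ u x : ℝ) :=
      mul_le_mul_of_nonneg_left this (le_of_lt hinv)
    exact lt_of_le_of_ne h1 (Ne.symm hne)
end

section
/- Let X ⊂ ℝ^k be finite and in general position with n > k points. A weighted mean T(X) = (Σ_i w_i x_i)/(Σ_i w_i) with weights 0 ≤ w_i ≤ 1 and at least k+1 weights equal to 1 satisfies condition (C_k): for any unit vector u such that the inner products y_i = u·x_i satisfy y_1 = ... = y_k < y_{k+1} ≤ ... ≤ y_n (after renumbering), one has u·T(X) ≥ y_k + (y_{k+1} - y_k)/n. -/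
attribute [local instance] Classical.propDecidable

open Finset

theorem weighted_mean_satisfies_Ck {k n : ℕ} (hk : 2 ≤ k) (hkn : k < n)
    (x : Fin n → EuclideanSpace ℝ (Fin k))
    (hGP : InGeneralPosition (univ.image x))
    (w : Fin n → ℝ) (hw0 : ∀ i, 0 ≤ w i) (hw1 : ∀ i, w i ≤ 1)
    (hfull : k + 1 ≤ (univ.filter fun i => w i = 1).card)
    (u : EuclideanSpace ℝ (Fin k)) (hu : ‖u‖ = 1)
    (hsorted : Monotone fun i : Fin n => (inner ℝ u (x i) : ℝ))
    (heq : ∀ i : Fin n, (i : ℕ) < k →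
      (inner ℝ u (x i) : ℝ) = (inner ℝ u (x ⟨0, by omega⟩) : ℝ))
    (hlt : (inner ℝ u (x ⟨0, by omega⟩) : ℝ) < (inner ℝ u (x ⟨k, hkn⟩) : ℝ)) :
    (inner ℝ u (x ⟨0, by omega⟩) : ℝ) +
        ((inner ℝ u (x ⟨k, hkn⟩) : ℝ) - (inner ℝ u (x ⟨0, by omega⟩) : ℝ)) / n ≤
      (inner ℝ u ((∑ i, w i)⁻¹ • ∑ i, w i • x i) : ℝ) := by
  set y : Fin n → ℝ := fun i => (inner ℝ u (x i) : ℝ) with hy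
  set a : ℝ := y ⟨0, by omega⟩ with ha
  set b : ℝ := y ⟨k, hkn⟩ with hb
  set W : ℝ := ∑ i, w i with hW
  -- rewrite the RHS
  have hrhs : (inner ℝ u (W⁻¹ • ∑ i, w i • x i) : ℝ) = W⁻¹ * ∑ i, w i * y i := by
    rw [real_inner_smul_right, inner_sum]
    congr 1
    exact Finset.sum_congr rfl fun i _ => real_inner_smul_right u (x i) (w i)
  rw [hrhs]
  -- W bounds
  have hW1 : (k + 1 : ℝ) ≤ W := by
    calc (k + 1 : ℝ) ≤ ((univ.filter fun i => w i = 1).card : ℝ) := by exact_mod_cast hfull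
      _ = ∑ i ∈ univ.filter (fun i => w i = 1), w i := by
          rw [Finset.sum_congr rfl (fun i hi => (Finset.mem_filter.1 hi).2)]
          simp
      _ ≤ W := Finset.sum_le_sum_of_subset_of_nonneg (Finset.filter_subset _ _)
          (fun i _ _ => hw0 i)
  have hWpos : (0 : ℝ) < W := lt_of_lt_of_le (by positivity) hW1
  have hWn : W ≤ (n : ℝ) := by
    calc W ≤ ∑ _i : Fin n, (1 : ℝ) := Finset.sum_le_sum fun i _ => hw1 i
      _ = n := by simp
  -- there exists j with w j = 1 and k ≤ j
  obtain ⟨j, hjw, hjk⟩ : ∃ j : Fin n, w j = 1 ∧ k ≤ (j : ℕ) := by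
    by_contra h
    push_neg at h
    have hsub : (univ.filter fun i => w i = 1) ⊆ (univ.filter fun i : Fin n => (i : ℕ) < k) := by
      intro i hi
      simp only [Finset.mem_filter, Finset.mem_univ, true_and] at hi ⊢
      exact h i hi
    have hcard : (univ.filter fun i : Fin n => (i : ℕ) < k).card ≤ k := by
      have := Finset.card_le_card_of_injOn (f := fun i : Fin n => (i : ℕ))
        (s := univ.filter fun i : Fin n => (i : ℕ) < k) (t := Finset.range k)
        (fun i hi => by
          simp only [Finset.mem_coe, Finset.mem_filter, Finset.mem_univ, true_and] at hi
          exact Finset.mem_range.2 hi)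
        (fun i _ j _ hij => Fin.val_injective hij)
      simpa using this
    have := le_trans hfull (le_trans (Finset.card_le_card hsub) hcard)
    omega
  -- y i ≥ a for all i, and y j ≥ b
  have hya : ∀ i, a ≤ y i := fun i => hsorted (Fin.le_def.mpr (Nat.zero_le _))
  have hyb : b ≤ y j := hsorted (by exact hjk)
  -- key sum bound
  have hkey : W * a + (b - a) ≤ ∑ i, w i * y i := by
    have h1 : b - a ≤ ∑ i, w i * (y i - a) := by
      calc b - a = w j * (y j - a) - (y j - b) := by rw [hjw]; ring
        _ ≤ w j * (y j - a) := by
            have : 0 ≤ y j - b := sub_nonneg.2 hyb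
            linarith
        _ ≤ ∑ i, w i * (y i - a) := Finset.single_le_sum
            (fun i _ => mul_nonneg (hw0 i) (sub_nonneg.2 (hya i))) (Finset.mem_univ j)
    have h2 : ∑ i, w i * (y i - a) = (∑ i, w i * y i) - W * a := by
      rw [hW, Finset.sum_mul]
      rw [← Finset.sum_sub_distrib]
      exact Finset.sum_congr rfl fun i _ => by ring
    linarith
  -- conclude
  have hba : 0 < b - a := sub_pos.2 hlt
  have hnpos : (0 : ℝ) < n := lt_of_lt_of_le hWpos hWn
  have hdiv : (b - a) / n ≤ (b - a) / W :=
    div_le_div_of_nonneg_left (le_of_lt hba) hWpos hWn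
  calc a + (b - a) / n ≤ a + (b - a) / W := by linarith
    _ = W⁻¹ * (W * a + (b - a)) := by field_simp
    _ ≤ W⁻¹ * ∑ i, w i * y i := by
        exact mul_le_mul_of_nonneg_left hkey (le_of_lt (inv_pos.2 hWpos))
end

section
/- Let θ ∈ ℝ^k have first coordinate θ_1 > 0 and let M > 0. Let H = {z ∈ ℝ^k : z_1 ≥ α} for some α > 0, let B = closed ball of radius M around θ, and let g_γ be the shear transform. Then for all sufficiently large γ, the intersection B ∩ g_γ(B) ∩ H is empty. -/
/-- The shear transform g_γ relative to an orthonormal basis e_1,...,e_k: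
g_γ(e_1) = e_1 + γ e_2 and g_γ(e_j) = e_j for j ≥ 2. -/
noncomputable def shear {k : ℕ} (hk : 2 ≤ k)
    (b : OrthonormalBasis (Fin k) ℝ (EuclideanSpace ℝ (Fin k))) (γ : ℝ) :
    EuclideanSpace ℝ (Fin k) →ₗ[ℝ] EuclideanSpace ℝ (Fin k) :=
  b.toBasis.constr ℝ fun j =>
    if j = (⟨0, by omega⟩ : Fin k) then b ⟨0, by omega⟩ + γ • b ⟨1, by omega⟩ else b j

lemma shear_apply {k : ℕ} (hk : 2 ≤ k)
    (b : OrthonormalBasis (Fin k) ℝ (EuclideanSpace ℝ (Fin k))) (γ : ℝ)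
    (x : EuclideanSpace ℝ (Fin k)) :
    shear hk b γ x = x + (γ * (inner ℝ (b ⟨0, by omega⟩) x : ℝ)) • b ⟨1, by omega⟩ := by
  have key : shear hk b γ = LinearMap.id +
      γ • ((innerSL ℝ (b ⟨0, by omega⟩)).toLinearMap.smulRight (b ⟨1, by omega⟩)) := by
    apply b.toBasis.ext
    intro j
    have hinner : ∀ i j : Fin k, (inner ℝ (b i) (b j) : ℝ) = if i = j then 1 else 0 :=
      orthonormal_iff_ite.mp b.orthonormal
    rw [shear, Module.Basis.constr_basis]
    simp only [OrthonormalBasis.coe_toBasis, LinearMap.add_apply,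
      LinearMap.id_apply, LinearMap.smul_apply, LinearMap.smulRight_apply,
      ContinuousLinearMap.coe_coe, innerSL_apply_apply, hinner]
    by_cases h : j = (⟨0, by omega⟩ : Fin k)
    · subst h; simp
    · simp [h, Ne.symm h]
  rw [key]
  simp [mul_smul]

theorem ball_shearBall_halfspace_eventually_disjoint {k : ℕ} (hk : 2 ≤ k)
    (b : OrthonormalBasis (Fin k) ℝ (EuclideanSpace ℝ (Fin k)))
    (θ : EuclideanSpace ℝ (Fin k))
    (hθ : 0 < (inner ℝ (b ⟨0, by omega⟩) θ : ℝ)) (M α : ℝ) (hM : 0 < M) (hα : 0 < α) :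
    ∃ Γ : ℝ, ∀ γ : ℝ, Γ ≤ γ →
      Metric.closedBall θ M ∩ (shear hk b γ '' Metric.closedBall θ M) ∩
        {z : EuclideanSpace ℝ (Fin k) | α ≤ (inner ℝ (b ⟨0, by omega⟩) z : ℝ)} = ∅ := by
  set e0 : EuclideanSpace ℝ (Fin k) := b ⟨0, by omega⟩ with he0
  set e1 : EuclideanSpace ℝ (Fin k) := b ⟨1, by omega⟩ with he1
  set C : ℝ := |(inner ℝ e1 θ : ℝ)| + M with hC
  refine ⟨(2 * C + 1) / α, fun γ hγ => ?_⟩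
  ext z
  simp only [Set.mem_inter_iff, Set.mem_empty_iff_false, iff_false, Set.mem_setOf_eq,
    Metric.mem_closedBall, Set.mem_image]
  rintro ⟨⟨hz, x, hx, rfl⟩, hH⟩
  have hbound : ∀ w : EuclideanSpace ℝ (Fin k), dist w θ ≤ M → |(inner ℝ e1 w : ℝ)| ≤ C := by
    intro w hw
    have h1 : |(inner ℝ e1 (w - θ) : ℝ)| ≤ ‖e1‖ * ‖w - θ‖ := abs_real_inner_le_norm e1 (w - θ)
    rw [he1] at h1 ⊢
    rw [b.orthonormal.1] at h1
    rw [dist_eq_norm] at hw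
    have h2 : (inner ℝ (b ⟨1, by omega⟩) (w - θ) : ℝ) =
        (inner ℝ (b ⟨1, by omega⟩) w : ℝ) - inner ℝ (b ⟨1, by omega⟩) θ := inner_sub_right _ _ _
    rw [h2] at h1
    have := abs_sub_abs_le_abs_sub (inner ℝ (b ⟨1, by omega⟩) w : ℝ) (inner ℝ (b ⟨1, by omega⟩) θ)
    simp only [hC, he1]
    nlinarith [abs_nonneg (inner ℝ (b ⟨1, by omega⟩) w : ℝ)]
  have hz2 : |(inner ℝ e1 (shear hk b γ x) : ℝ)| ≤ C := hbound _ hz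
  have hx2 : |(inner ℝ e1 x : ℝ)| ≤ C := hbound _ hx
  have hinner : ∀ i j : Fin k, (inner ℝ (b i) (b j) : ℝ) = if i = j then 1 else 0 :=
    orthonormal_iff_ite.mp b.orthonormal
  have h01 : (inner ℝ e0 e1 : ℝ) = 0 := by
    rw [he0, he1, hinner]
    have : (⟨0, by omega⟩ : Fin k) ≠ ⟨1, by omega⟩ := by simp [Fin.ext_iff]
    simp [this]
  have h11 : (inner ℝ e1 e1 : ℝ) = 1 := by rw [he1, hinner]; simp
  have hz1 : (inner ℝ e0 (shear hk b γ x) : ℝ) = inner ℝ e0 x := by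
    rw [shear_apply, inner_add_right, inner_smul_right]
    rw [← he0, ← he1, h01]; ring
  have hz2' : (inner ℝ e1 (shear hk b γ x) : ℝ) = inner ℝ e1 x + γ * inner ℝ e0 x := by
    rw [shear_apply, inner_add_right, inner_smul_right]
    rw [← he0, ← he1, h11]; ring
  -- first coordinate of x is ≥ α
  rw [hz1] at hH
  rw [hz2'] at hz2
  have hC0 : 0 ≤ C := by positivity
  have hγpos : 0 < γ := lt_of_lt_of_le (by positivity) hγ
  have hγα : 2 * C + 1 ≤ γ * α := by
    rw [div_le_iff₀ hα] at hγ
    linarith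
  have : γ * α ≤ γ * (inner ℝ e0 x : ℝ) := by nlinarith
  have habs := abs_le.mp hz2
  have habs' := abs_le.mp hx2
  linarith [habs.2, habs'.1]
end

section
/- If a location estimator T satisfies depth(T(X), X) ≥ k + 1 for all data sets X of n points in general position in ℝ^k, then T satisfies condition (C_k): for every unit vector u with u·x_1 = ... = u·x_k < u·x_{k+1} ≤ ... ≤ u·x_n (after renumbering), there is α > 0 with u·T(X) ≥ u·x_k + α. -/
attribute [local instance] Classical.propDecidable

theorem depth_ge_implies_Ck {k n : ℕ} (hk : 2 ≤ k) (hkn : k < n)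
    (X : Finset (EuclideanSpace ℝ (Fin k))) (hX : X.card = n)
    (hGP : InGeneralPosition X) (θ : EuclideanSpace ℝ (Fin k))
    (hdepth : ∀ u : EuclideanSpace ℝ (Fin k), ‖u‖ = 1 →
      k + 1 ≤ (X.filter fun x => (inner ℝ u θ : ℝ) ≤ (inner ℝ u x : ℝ)).card)
    (u : EuclideanSpace ℝ (Fin k)) (c : ℝ) (hu : ‖u‖ = 1)
    (hface : (X.filter fun x => (inner ℝ u x : ℝ) = c).card = k)
    (hmin : ∀ x ∈ X, c ≤ (inner ℝ u x : ℝ)) :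
    ∃ α : ℝ, 0 < α ∧ c + α ≤ (inner ℝ u θ : ℝ) := by
  have hnu : ‖(-u : EuclideanSpace ℝ (Fin k))‖ = 1 := by rwa [norm_neg]
  have hS := hdepth (-u) hnu
  set S := X.filter fun x => (inner ℝ (-u) θ : ℝ) ≤ (inner ℝ (-u) x : ℝ) with hSdef
  -- S has more than k elements, face has k, so some x ∈ S off the face
  have hsub : ¬ S ⊆ X.filter fun x => (inner ℝ u x : ℝ) = c := by
    intro h
    have := Finset.card_le_card h
    omega
  obtain ⟨x, hxS, hxn⟩ := Finset.not_subset.mp hsub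
  have hxX : x ∈ X := (Finset.mem_filter.mp hxS).1
  have hxle : (inner ℝ (-u) θ : ℝ) ≤ (inner ℝ (-u) x : ℝ) := (Finset.mem_filter.mp hxS).2
  have hxne : (inner ℝ u x : ℝ) ≠ c := by
    intro h; exact hxn (Finset.mem_filter.mpr ⟨hxX, h⟩)
  have hxgt : c < (inner ℝ u x : ℝ) := lt_of_le_of_ne (hmin x hxX) (Ne.symm hxne)
  have hle : (inner ℝ u x : ℝ) ≤ (inner ℝ u θ : ℝ) := by
    have h1 : -(inner ℝ u θ : ℝ) ≤ -(inner ℝ u x : ℝ) := by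
      simpa [inner_neg_left] using hxle
    linarith
  exact ⟨(inner ℝ u θ : ℝ) - c, by linarith, by linarith⟩
end

section
/- Any translation equivariant location estimator on samples of n points in ℝ^k has finite-sample replacement breakdown value at most ⌊(n+1)/2⌋ / n. -/
attribute [local instance] Classical.propDecidable

open Finset

/-- Any translation equivariant location estimator breaks down after replacing
⌊(n+1)/2⌋ of the n points, i.e. its finite-sample replacement breakdown value
is at most ⌊(n+1)/2⌋ / n. -/
theorem translation_equivariant_breakdown_bound {k n : ℕ} (hk : 1 ≤ k) (hn : 1 ≤ n)
    (T : (Fin n → EuclideanSpace ℝ (Fin k)) → EuclideanSpace ℝ (Fin k))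
    (hequiv : ∀ (x : Fin n → EuclideanSpace ℝ (Fin k)) (v : EuclideanSpace ℝ (Fin k)),
      T (fun i => x i + v) = T x + v)
    (X : Fin n → EuclideanSpace ℝ (Fin k)) :
    ∀ M : ℝ, ∃ X' : Fin n → EuclideanSpace ℝ (Fin k),
      (univ.filter fun i => X' i ≠ X i).card ≤ (n + 1) / 2 ∧ M < ‖T X' - T X‖ := by
  intro M
  set m := (n + 1) / 2 with hm
  -- the translation vector
  set v : EuclideanSpace ℝ (Fin k) :=
    (2 * |M| + 1) • EuclideanSpace.single (⟨0, hk⟩ : Fin k) (1 : ℝ) with hv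
  have hvnorm : ‖v‖ = 2 * |M| + 1 := by
    rw [hv, norm_smul, EuclideanSpace.norm_single]
    simp [abs_of_nonneg (by positivity : (0:ℝ) ≤ 2 * |M| + 1)]
  set Z : Fin n → EuclideanSpace ℝ (Fin k) :=
    fun i => if (i : ℕ) < m then X i + v else X i with hZ
  set W : Fin n → EuclideanSpace ℝ (Fin k) := fun i => Z i - v with hW
  have hZW : Z = fun i => W i + v := by
    funext i
    simp [hW, sub_add_cancel]
  have hTZW : T Z = T W + v := by
    rw [hZW]; exact hequiv W v
  -- cardinality bounds
  have hcardZ : (univ.filter fun i => Z i ≠ X i).card ≤ m := by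
    have hsub : (univ.filter fun i => Z i ≠ X i) ⊆
        (univ.filter fun i : Fin n => (i : ℕ) < m) := by
      intro i hi
      simp only [mem_filter, mem_univ, true_and] at hi ⊢
      by_contra h
      apply hi
      simp [hZ, h]
    refine le_trans (card_le_card hsub) ?_
    calc (univ.filter fun i : Fin n => (i : ℕ) < m).card
        ≤ (Finset.range m).card := by
          refine Finset.card_le_card_of_injOn (fun i => (i : ℕ)) ?_ ?_
          · intro i hi
            simp only [Finset.mem_coe, mem_filter, mem_univ, true_and] at hi
            simpa using hi
          · intro a _ b _ hab
            exact Fin.ext hab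
      _ = m := Finset.card_range m
  have hcardW : (univ.filter fun i => W i ≠ X i).card ≤ m := by
    have hsub : (univ.filter fun i => W i ≠ X i) ⊆
        (univ.filter fun i : Fin n => ¬ (i : ℕ) < m) := by
      intro i hi
      simp only [mem_filter, mem_univ, true_and] at hi ⊢
      intro h
      apply hi
      simp [hW, hZ, h]
    refine le_trans (card_le_card hsub) ?_
    have h1 : (univ.filter fun i : Fin n => ¬ (i : ℕ) < m).card ≤ n - m := by
      calc (univ.filter fun i : Fin n => ¬ (i : ℕ) < m).card
          ≤ (Finset.Ico m n).card := by
            refine Finset.card_le_card_of_injOn (fun i => (i : ℕ)) ?_ ?_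
            · intro i hi
              simp only [Finset.mem_coe, mem_filter, mem_univ, true_and, not_lt] at hi
              simp [Finset.mem_Ico, hi, i.isLt]
            · intro a _ b _ hab
              exact Fin.ext hab
        _ = n - m := Nat.card_Ico m n
    refine le_trans h1 ?_
    omega
  -- one of Z, W works
  have hsum : ‖T Z - T X‖ + ‖T W - T X‖ ≥ 2 * |M| + 1 := by
    have : T Z - T W = v := by rw [hTZW]; abel
    calc ‖T Z - T X‖ + ‖T W - T X‖ ≥ ‖(T Z - T X) - (T W - T X)‖ :=
          norm_sub_le _ _
      _ = ‖v‖ := by rw [← this, sub_sub_sub_cancel_right]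
      _ = 2 * |M| + 1 := hvnorm
  by_cases hcase : M < ‖T Z - T X‖
  · exact ⟨Z, hcardZ, hcase⟩
  · refine ⟨W, hcardW, ?_⟩
    push_neg at hcase
    have hM : M ≤ |M| := le_abs_self M
    nlinarith [norm_nonneg (T Z - T X), norm_nonneg (T W - T X)]
end
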